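/- Let N > m > 1 and p > (N(m-1))/(N-m). Then there exists C > 0 such that the function u(x) = C(1 + |x|^{m/(m-1)})^{-(m-1)/(p-m+1)} is a positive bounded solution of the differential inequality -Δ_m u ≥ u^p on ℝ^N, where Δ_m u = div(|∇u|^{m-2}∇u). -/

import Mathlib

open Real

/-- Divergence of a vector field on Euclidean space. -/
noncomputable def vdiv {N : ℕ} (F : EuclideanSpace ℝ (Fin N) → EuclideanSpace ℝ (Fin N))
    (x : EuclideanSpace ℝ (Fin N)) : ℝ :=
  ∑ i, fderiv ℝ F x (EuclideanSpace.single i 1) i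

/-- The m-Laplacian `Δ_m u = div(|∇u|^{m-2} ∇u)`. -/
noncomputable def mLap {N : ℕ} (m : ℝ) (u : EuclideanSpace ℝ (Fin N) → ℝ)
    (x : EuclideanSpace ℝ (Fin N)) : ℝ :=
  vdiv (fun y => (‖gradient u y‖ ^ (m - 2)) • gradient u y) x


variable {E : Type*} [NormedAddCommGroup E] [InnerProductSpace ℝ E] [CompleteSpace E]

theorem aux_norm_rpow (q : ℝ) (hq : 1 < q) (y : E) :
    HasFDerivAt (fun x : E => ‖x‖ ^ q) ((q * ‖y‖ ^ (q - 2)) • (innerSL ℝ y)) y := by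
  have hq0 : q ≠ 0 := by linarith
  have hq1 : q - 1 ≠ 0 := by intro h; apply hq.ne'; linarith
  rcases eq_or_ne y 0 with rfl | hy
  · have h0 : (q * ‖(0:E)‖ ^ (q - 2)) • (innerSL ℝ (0:E)) = 0 := by
      simp
    rw [h0, hasFDerivAt_iff_isLittleO_nhds_zero]
    simp only [zero_add, ContinuousLinearMap.zero_apply, sub_zero, norm_zero,
      Real.zero_rpow hq0]
    rw [Asymptotics.isLittleO_iff]
    intro c hc
    have ht : Filter.Tendsto (fun x : E => ‖x‖ ^ (q - 1)) (nhds 0) (nhds 0) := by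
      have h1 : Filter.Tendsto (fun x : E => ‖x‖) (nhds 0) (nhds 0) := by
        simpa using (continuous_norm (E := E)).tendsto 0
      have h2 : ContinuousAt (fun t : ℝ => t ^ (q - 1)) 0 :=
        Real.continuousAt_rpow_const 0 (q - 1) (Or.inr (by linarith))
      have h3 := h2.tendsto.comp h1
      rw [Real.zero_rpow hq1] at h3
      exact h3
    filter_upwards [ht (Metric.ball_mem_nhds 0 hc)] with x hx
    have hx' : ‖x‖ ^ (q - 1) < c := by
      have := mem_ball_zero_iff.1 hx
      calc ‖x‖ ^ (q-1) ≤ |‖x‖ ^ (q-1)| := le_abs_self _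
        _ < c := by simpa [Real.norm_eq_abs] using this
    have hsplit : ‖x‖ ^ q = ‖x‖ ^ (q - 1) * ‖x‖ := by
      rcases eq_or_ne x 0 with rfl | hx0
      · simp [Real.zero_rpow hq0, Real.zero_rpow hq1]
      · nth_rewrite 3 [← Real.rpow_one ‖x‖]
        rw [← Real.rpow_add (norm_pos_iff.2 hx0)]
        ring_nf
    rw [Real.norm_eq_abs, abs_of_nonneg (Real.rpow_nonneg (norm_nonneg x) q), hsplit]
    exact mul_le_mul_of_nonneg_right hx'.le (norm_nonneg x)
  · have h2 : HasFDerivAt (fun x : E => ‖x‖ ^ 2) (2 • (innerSL ℝ y)) y :=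
      (hasStrictFDerivAt_norm_sq y).hasFDerivAt
    have hny : (0:ℝ) < ‖y‖ := norm_pos_iff.2 hy
    have h3 : HasDerivAt (fun t : ℝ => t ^ (q / 2)) (q / 2 * (‖y‖ ^ 2) ^ (q / 2 - 1)) (‖y‖ ^ 2) :=
      Real.hasDerivAt_rpow_const (Or.inl (by positivity))
    have h4 := h3.comp_hasFDerivAt y h2
    have hpow : ∀ x : E, (‖x‖ ^ 2) ^ (q / 2) = ‖x‖ ^ q := by
      intro x
      rw [← Real.rpow_natCast ‖x‖ 2, ← Real.rpow_mul (norm_nonneg x)]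
      congr 1
      push_cast
      ring
    have hpow2 : (‖y‖ ^ 2 : ℝ) ^ (q / 2 - 1) = ‖y‖ ^ (q - 2) := by
      rw [← Real.rpow_natCast ‖y‖ 2, ← Real.rpow_mul (norm_nonneg y)]
      congr 1
      push_cast
      ring
    have hfun : ((fun t : ℝ => t ^ (q / 2)) ∘ fun x : E => ‖x‖ ^ 2) = fun x : E => ‖x‖ ^ q := by
      funext x
      simp only [Function.comp_apply, hpow]
    have hval : (q / 2 * (‖y‖ ^ 2) ^ (q / 2 - 1)) • (2 • (innerSL ℝ y)) =
        (q * ‖y‖ ^ (q - 2)) • (innerSL ℝ y) := by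
      ext z
      simp only [ContinuousLinearMap.smul_apply, smul_eq_mul, hpow2]
      push_cast
      ring
    rw [hfun, hval] at h4
    exact h4

theorem aux_grad (q α c : ℝ) (hq : 1 < q) (y : E) :
    HasGradientAt (fun x : E => c * (1 + ‖x‖ ^ q) ^ α)
      ((c * α * q * ‖y‖ ^ (q - 2) * (1 + ‖y‖ ^ q) ^ (α - 1)) • y) y := by
  have ht0 : (0:ℝ) < 1 + ‖y‖ ^ q := by positivity
  have hg : HasDerivAt (fun t : ℝ => c * (1 + t) ^ α)
      (c * (α * (1 + ‖y‖ ^ q) ^ (α - 1) * 1)) (‖y‖ ^ q) := by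
    have := (HasDerivAt.rpow_const (p := α) ((hasDerivAt_id (‖y‖ ^ q)).const_add 1)
      (Or.inl ht0.ne')).const_mul c
    simpa [mul_comm, mul_assoc, mul_left_comm] using this
  have h := hg.comp_hasFDerivAt y (aux_norm_rpow q hq y)
  have heq : (InnerProductSpace.toDual ℝ E)
      ((c * α * q * ‖y‖ ^ (q - 2) * (1 + ‖y‖ ^ q) ^ (α - 1)) • y) =
      (c * (α * (1 + ‖y‖ ^ q) ^ (α - 1) * 1)) • ((q * ‖y‖ ^ (q - 2)) • (innerSL ℝ y)) := by
    ext z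
    simp only [InnerProductSpace.toDual_apply_apply, ContinuousLinearMap.smul_apply, smul_eq_mul,
      inner_smul_left, innerSL_apply_apply, RCLike.conj_to_real, map_mul]
    push_cast
    ring
  rw [hasGradientAt_iff_hasFDerivAt, heq]
  exact h

theorem aux_field (m q α c : ℝ) (hq1 : 1 < q) (hq : (q - 1) * (m - 1) = 1)
    (hc : 0 < c) (hα : α < 0) (y : E) :
    (‖gradient (fun x : E => c * (1 + ‖x‖ ^ q) ^ α) y‖ ^ (m - 2)) •
        gradient (fun x : E => c * (1 + ‖x‖ ^ q) ^ α) y =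
      (-((c * (-α) * q) ^ (m - 1)) * (1 + ‖y‖ ^ q) ^ ((α - 1) * (m - 1))) • y := by
  have hgrad := (aux_grad q α c hq1 y).gradient
  rw [hgrad]
  rcases eq_or_ne y 0 with rfl | hy
  · simp
  · have hr : (0:ℝ) < ‖y‖ := norm_pos_iff.2 hy
    have hw : (0:ℝ) < 1 + ‖y‖ ^ q := by positivity
    set r := ‖y‖ with hrdef
    set w := 1 + ‖y‖ ^ q with hwdef
    have hrp : (0:ℝ) < r ^ (q - 2) := Real.rpow_pos_of_pos hr _
    have hwp : (0:ℝ) < w ^ (α - 1) := Real.rpow_pos_of_pos hw _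
    set s : ℝ := c * α * q * r ^ (q - 2) * w ^ (α - 1) with hsdef
    set A : ℝ := c * (-α) * q with hAdef
    have hA : (0:ℝ) < A := by
      rw [hAdef]; have : (0:ℝ) < -α := by linarith
      positivity
    have hs_eq : s = -(A * (r ^ (q - 2) * w ^ (α - 1))) := by rw [hsdef, hAdef]; ring
    have hs_neg : s < 0 := by
      rw [hs_eq]; simp only [neg_neg, neg_lt, neg_zero]; positivity
    have hnorm : ‖s • y‖ = A * (r ^ (q - 2) * w ^ (α - 1)) * r := by
      rw [norm_smul, Real.norm_eq_abs, abs_of_neg hs_neg, hs_eq, neg_neg]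
    rw [smul_smul, hnorm]
    congr 1
    have hX : (0:ℝ) ≤ r ^ (q - 2) * w ^ (α - 1) := by positivity
    have e1 : A * (r ^ (q - 2) * w ^ (α - 1)) * r
        = A * (r ^ (q - 1) * w ^ (α - 1)) := by
      have : r ^ (q - 2) * r = r ^ (q - 1) := by
        rw [show q - 1 = (q - 2) + 1 by ring, Real.rpow_add hr, Real.rpow_one]
      rw [← this]; ring
    have e2 : (A * (r ^ (q - 1) * w ^ (α - 1))) ^ (m - 2)
        = A ^ (m - 2) * (r ^ ((q - 1) * (m - 2)) * w ^ ((α - 1) * (m - 2))) := by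
      rw [Real.mul_rpow hA.le (by positivity), Real.mul_rpow (by positivity) hwp.le,
        ← Real.rpow_mul hr.le, ← Real.rpow_mul hw.le]
    have eA : A ^ (m - 2) * A = A ^ (m - 1) := by
      rw [show m - 1 = (m - 2) + 1 by ring, Real.rpow_add hA, Real.rpow_one]
    have er : r ^ ((q - 1) * (m - 2)) * r ^ (q - 2) = 1 := by
      rw [← Real.rpow_add hr, show (q - 1) * (m - 2) + (q - 2) = (q - 1) * (m - 1) - 1 by ring,
        hq]
      norm_num
    have ew : w ^ ((α - 1) * (m - 2)) * w ^ (α - 1) = w ^ ((α - 1) * (m - 1)) := by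
      rw [← Real.rpow_add hw]; congr 1; ring
    calc (A * (r ^ (q - 2) * w ^ (α - 1)) * r) ^ (m - 2) * s
        = (A * (r ^ (q - 1) * w ^ (α - 1))) ^ (m - 2) * (-(A * (r ^ (q - 2) * w ^ (α - 1)))) := by
          rw [e1, hs_eq]
      _ = -((A ^ (m - 2) * A) * ((r ^ ((q - 1) * (m - 2)) * r ^ (q - 2)) *
            (w ^ ((α - 1) * (m - 2)) * w ^ (α - 1)))) := by rw [e2]; ring
      _ = -(A ^ (m - 1)) * w ^ ((α - 1) * (m - 1)) := by rw [eA, er, ew]; ring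

theorem aux_vdiv {N : ℕ} (k β q : ℝ) (hq1 : 1 < q) (x : EuclideanSpace ℝ (Fin N)) :
    vdiv (fun y => (k * (1 + ‖y‖ ^ q) ^ β) • y) x
      = N * (k * (1 + ‖x‖ ^ q) ^ β)
        + k * β * q * (1 + ‖x‖ ^ q) ^ (β - 1) * ‖x‖ ^ q := by
  set g : (EuclideanSpace ℝ (Fin N)) := (k * β * q * ‖x‖ ^ (q - 2) * (1 + ‖x‖ ^ q) ^ (β - 1)) • x with hg
  have hc : HasFDerivAt (fun y : (EuclideanSpace ℝ (Fin N)) => k * (1 + ‖y‖ ^ q) ^ β)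
      ((InnerProductSpace.toDual ℝ (EuclideanSpace ℝ (Fin N))) g) x := (aux_grad q β k hq1 x).hasFDerivAt
  have hF : HasFDerivAt (fun y : (EuclideanSpace ℝ (Fin N)) => (k * (1 + ‖y‖ ^ q) ^ β) • y)
      ((k * (1 + ‖x‖ ^ q) ^ β) • ContinuousLinearMap.id ℝ (EuclideanSpace ℝ (Fin N)) +
        ((InnerProductSpace.toDual ℝ (EuclideanSpace ℝ (Fin N))) g).smulRight x) x :=
    hc.smul (hasFDerivAt_id x)
  rw [vdiv, hF.fderiv]
  have happ : ∀ i : Fin N,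
      (((k * (1 + ‖x‖ ^ q) ^ β) • ContinuousLinearMap.id ℝ (EuclideanSpace ℝ (Fin N)) +
        ((InnerProductSpace.toDual ℝ (EuclideanSpace ℝ (Fin N))) g).smulRight x) (EuclideanSpace.single i 1)) i =
      (k * (1 + ‖x‖ ^ q) ^ β) * (if i = i then 1 else 0) +
        (k * β * q * ‖x‖ ^ (q - 2) * (1 + ‖x‖ ^ q) ^ (β - 1)) * x i * x i := by
    intro i
    simp only [ContinuousLinearMap.add_apply, ContinuousLinearMap.smul_apply,
      ContinuousLinearMap.id_apply, ContinuousLinearMap.smulRight_apply,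
      InnerProductSpace.toDual_apply_apply, PiLp.add_apply, PiLp.smul_apply, smul_eq_mul, hg]
    rw [real_inner_smul_left, real_inner_comm, EuclideanSpace.inner_single_left]
    simp [EuclideanSpace.single_apply]
  rw [Finset.sum_congr rfl (fun i _ => happ i)]
  simp only [if_pos rfl]
  rw [Finset.sum_add_distrib, Finset.sum_const, Finset.card_univ, Fintype.card_fin]
  have hxx : ∑ i, x i * x i = ‖x‖ ^ (2:ℕ) := by
    rw [EuclideanSpace.norm_sq_eq]
    exact Finset.sum_congr rfl fun i _ => by rw [Real.norm_eq_abs, sq_abs, sq]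
  have hsum : ∑ i : Fin N, k * β * q * ‖x‖ ^ (q - 2) * (1 + ‖x‖ ^ q) ^ (β - 1) * x i * x i
      = k * β * q * ‖x‖ ^ (q - 2) * (1 + ‖x‖ ^ q) ^ (β - 1) * ‖x‖ ^ (2:ℕ) := by
    rw [← hxx, Finset.mul_sum]
    apply Finset.sum_congr rfl
    intros
    ring
  rw [hsum]
  simp only [if_true, eq_self_iff_true, mul_one, nsmul_eq_mul]
  have hnn : ‖x‖ ^ (q - 2) * ‖x‖ ^ (2:ℕ) = ‖x‖ ^ q := by
    rcases eq_or_ne x 0 with rfl | hx0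
    · simp [Real.zero_rpow (show q ≠ 0 by linarith)]
    · rw [← Real.rpow_natCast ‖x‖ 2, ← Real.rpow_add (norm_pos_iff.2 hx0)]
      congr 1
      push_cast
      ring
  calc (N:ℝ) * (k * (1 + ‖x‖ ^ q) ^ β)
        + k * β * q * ‖x‖ ^ (q - 2) * (1 + ‖x‖ ^ q) ^ (β - 1) * ‖x‖ ^ (2:ℕ)
      = (N:ℝ) * (k * (1 + ‖x‖ ^ q) ^ β)
        + k * β * q * (1 + ‖x‖ ^ q) ^ (β - 1) * (‖x‖ ^ (q - 2) * ‖x‖ ^ (2:ℕ)) := by ring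
    _ = _ := by rw [hnn]

theorem aux_contDiff (q α c : ℝ) (hq : 1 < q) (hα : α < 0) (hc : 0 < c) :
    ContDiff ℝ 1 (fun x : E => c * (1 + ‖x‖ ^ q) ^ α) := by
  rw [contDiff_one_iff_fderiv]
  have hd : ∀ y : E, HasFDerivAt (fun x : E => c * (1 + ‖x‖ ^ q) ^ α)
      ((InnerProductSpace.toDual ℝ E)
        ((c * α * q * ‖y‖ ^ (q - 2) * (1 + ‖y‖ ^ q) ^ (α - 1)) • y)) y :=
    fun y => (aux_grad q α c hq y).hasFDerivAt
  constructor
  · exact fun y => (hd y).differentiableAt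
  · have hfd : fderiv ℝ (fun x : E => c * (1 + ‖x‖ ^ q) ^ α) = fun y =>
        (InnerProductSpace.toDual ℝ E)
          ((c * α * q * ‖y‖ ^ (q - 2) * (1 + ‖y‖ ^ q) ^ (α - 1)) • y) :=
      funext fun y => (hd y).fderiv
    rw [hfd]
    have hΦ : Continuous (fun y : E =>
        (c * α * q * ‖y‖ ^ (q - 2) * (1 + ‖y‖ ^ q) ^ (α - 1)) • y) := by
      rw [continuous_iff_continuousAt]
      intro y₀
      rcases eq_or_ne y₀ 0 with rfl | hy0
      · have hzero : (c * α * q * ‖(0:E)‖ ^ (q - 2) * (1 + ‖(0:E)‖ ^ q) ^ (α - 1)) • (0:E)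
            = 0 := by simp
        rw [ContinuousAt, hzero]
        apply squeeze_zero_norm (a := fun y : E => (c * (-α) * q) * ‖y‖ ^ (q - 1))
        · intro y
          rcases eq_or_ne y 0 with rfl | hy
          · simp [Real.zero_rpow (show q - 1 ≠ 0 by intro h; exact (by linarith : q ≠ 1) (by linarith))]
          · have hr : (0:ℝ) < ‖y‖ := norm_pos_iff.2 hy
            have hw : (0:ℝ) < 1 + ‖y‖ ^ q := by positivity
            have hrp : (0:ℝ) < ‖y‖ ^ (q - 2) := Real.rpow_pos_of_pos hr _
            have hwp : (0:ℝ) < (1 + ‖y‖ ^ q) ^ (α - 1) := Real.rpow_pos_of_pos hw _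
            have hneg : c * α * q * ‖y‖ ^ (q - 2) * (1 + ‖y‖ ^ q) ^ (α - 1) < 0 := by
              have h1 : (0:ℝ) < c * q * (‖y‖ ^ (q - 2)) * ((1 + ‖y‖ ^ q) ^ (α - 1)) := by
                positivity
              nlinarith
            rw [norm_smul, Real.norm_eq_abs, abs_of_neg hneg]
            have e1 : ‖y‖ ^ (q - 2) * ‖y‖ = ‖y‖ ^ (q - 1) := by
              rw [show q - 1 = (q - 2) + 1 by ring, Real.rpow_add hr, Real.rpow_one]
            have hle1 : (1 + ‖y‖ ^ q) ^ (α - 1) ≤ 1 :=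
              Real.rpow_le_one_of_one_le_of_nonpos
                (by have := Real.rpow_nonneg (norm_nonneg y) q; linarith) (by linarith)
            calc -(c * α * q * ‖y‖ ^ (q - 2) * (1 + ‖y‖ ^ q) ^ (α - 1)) * ‖y‖
                = (c * (-α) * q * ‖y‖ ^ (q - 1)) * (1 + ‖y‖ ^ q) ^ (α - 1) := by
                  rw [← e1]; ring
              _ ≤ (c * (-α) * q * ‖y‖ ^ (q - 1)) * 1 := by
                  apply mul_le_mul_of_nonneg_left hle1
                  have : (0:ℝ) < -α := by linarith
                  positivity
              _ = c * (-α) * q * ‖y‖ ^ (q - 1) := by ring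
        · have h1 : Filter.Tendsto (fun y : E => ‖y‖ ^ (q - 1)) (nhds 0) (nhds 0) := by
            have hn : Filter.Tendsto (fun y : E => ‖y‖) (nhds 0) (nhds 0) := by
              simpa using (continuous_norm (E := E)).tendsto 0
            have h2 : ContinuousAt (fun t : ℝ => t ^ (q - 1)) 0 :=
              Real.continuousAt_rpow_const 0 (q - 1) (Or.inr (by linarith))
            have h3 := h2.tendsto.comp hn
            rwa [Real.zero_rpow (show q - 1 ≠ 0 by intro h; exact (by linarith : ¬(1:ℝ) < q) hq)] at h3
          have := h1.const_mul (c * (-α) * q)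
          simpa using this
      · have hr : (0:ℝ) < ‖y₀‖ := norm_pos_iff.2 hy0
        have hcnorm : ContinuousAt (fun y : E => ‖y‖ ^ (q - 2)) y₀ := by
          exact continuous_norm.continuousAt.rpow_const (Or.inl hr.ne')
        have hcw : ContinuousAt (fun y : E => (1 + ‖y‖ ^ q) ^ (α - 1)) y₀ := by
          have hb : ContinuousAt (fun y : E => 1 + ‖y‖ ^ q) y₀ := by
            apply ContinuousAt.add continuousAt_const
            exact continuous_norm.continuousAt.rpow_const (Or.inr (by linarith))
          have hw : (0:ℝ) < 1 + ‖y₀‖ ^ q := by positivity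
          exact hb.rpow_const (Or.inl hw.ne')
        exact (((continuousAt_const.mul hcnorm).mul hcw).smul continuousAt_id)
    exact ((InnerProductSpace.toDual ℝ E).continuous).comp hΦ

theorem stmt0 (N : ℕ) (m p : ℝ) (hm : 1 < m) (hmN : m < N)
    (hp : N * (m - 1) / (N - m) < p) :
    ∃ C > (0 : ℝ),
      (∀ x : EuclideanSpace ℝ (Fin N),
        0 < C * (1 + ‖x‖ ^ (m / (m - 1))) ^ (-(m - 1) / (p - m + 1))) ∧
      (∃ B : ℝ, ∀ x : EuclideanSpace ℝ (Fin N),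
        C * (1 + ‖x‖ ^ (m / (m - 1))) ^ (-(m - 1) / (p - m + 1)) ≤ B) ∧
      ContDiff ℝ 1 (fun x : EuclideanSpace ℝ (Fin N) =>
        C * (1 + ‖x‖ ^ (m / (m - 1))) ^ (-(m - 1) / (p - m + 1))) ∧
      (∀ x : EuclideanSpace ℝ (Fin N),
        (C * (1 + ‖x‖ ^ (m / (m - 1))) ^ (-(m - 1) / (p - m + 1))) ^ p ≤
          -mLap m (fun y : EuclideanSpace ℝ (Fin N) =>
            C * (1 + ‖y‖ ^ (m / (m - 1))) ^ (-(m - 1) / (p - m + 1))) x) := by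
  have hm1 : (0:ℝ) < m - 1 := by linarith
  have hNm : (0:ℝ) < (N:ℝ) - m := by linarith
  have hN0 : (0:ℝ) < (N:ℝ) := by linarith
  -- p > m - 1
  have hpm1 : m - 1 < p := by
    have h1 : (m - 1) ≤ (N:ℝ) * (m - 1) / ((N:ℝ) - m) := by
      rw [le_div_iff₀ hNm]
      nlinarith
    linarith
  have hpm : (0:ℝ) < p - m + 1 := by linarith
  set q : ℝ := m / (m - 1) with hqdef
  set α : ℝ := -(m - 1) / (p - m + 1) with hαdef
  have hq1 : 1 < q := by
    rw [hqdef, lt_div_iff₀ hm1]; linarith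
  have hqm : q * (m - 1) = m := by
    rw [hqdef]; field_simp
  have hq : (q - 1) * (m - 1) = 1 := by nlinarith
  have hα : α < 0 := by
    rw [hαdef]
    apply div_neg_of_neg_of_pos <;> linarith
  have hαval : α * (p - m + 1) = -(m - 1) := by
    rw [hαdef]; field_simp
  set β : ℝ := (α - 1) * (m - 1) with hβdef
  have hβq : β * q = (α - 1) * m := by
    rw [hβdef]; linear_combination (α - 1) * hqm
  -- N + β q > 0
  have hNβq : (0:ℝ) < N + β * q := by
    rw [hβq]
    have hp2 : (N:ℝ) * (m - 1) < p * ((N:ℝ) - m) := by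
      rw [div_lt_iff₀ hNm] at hp; linarith
    have hαgt : ((m:ℝ) - N) / m < α := by
      rw [hαdef, div_lt_div_iff₀ (by linarith) hpm]
      nlinarith
    have hm0 : (0:ℝ) < m := by linarith
    rw [div_lt_iff₀ hm0] at hαgt
    nlinarith
  set lam : ℝ := min (N:ℝ) ((N:ℝ) + β * q) with hlamdef
  have hlam : 0 < lam := lt_min hN0 hNβq
  set M : ℝ := ((-α) * q) ^ (m - 1) * lam with hMdef
  have hnegα : (0:ℝ) < -α := by linarith
  have hM : 0 < M := by
    rw [hMdef]
    have : (0:ℝ) < (-α) * q := by positivity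
    positivity
  set C : ℝ := min 1 (M ^ (1 / (p - m + 1))) with hCdef
  have hC : 0 < C := lt_min one_pos (Real.rpow_pos_of_pos hM _)
  have hCkey : C ^ (p - m + 1) ≤ M := by
    have h1 : C ≤ M ^ (1 / (p - m + 1)) := min_le_right _ _
    have h2 : C ^ (p - m + 1) ≤ (M ^ (1 / (p - m + 1))) ^ (p - m + 1) :=
      Real.rpow_le_rpow hC.le h1 hpm.le
    rwa [← Real.rpow_mul hM.le, one_div_mul_cancel hpm.ne', Real.rpow_one] at h2
  refine ⟨C, hC, fun x => ?_, ⟨C, fun x => ?_⟩, ?_, fun x => ?_⟩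
  · have : (0:ℝ) < 1 + ‖x‖ ^ q := by positivity
    have := Real.rpow_pos_of_pos this α
    positivity
  · -- boundedness by C
    have hw : (0:ℝ) < 1 + ‖x‖ ^ q := by positivity
    have h1 : (1 + ‖x‖ ^ q) ^ α ≤ 1 :=
      Real.rpow_le_one_of_one_le_of_nonpos
        (by have := Real.rpow_nonneg (norm_nonneg x) q; linarith) hα.le
    calc C * (1 + ‖x‖ ^ q) ^ α ≤ C * 1 := by
          apply mul_le_mul_of_nonneg_left h1 hC.le
      _ = C := mul_one C
  · exact aux_contDiff q α C hq1 hα hC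
  · -- the differential inequality
    set A : ℝ := C * (-α) * q with hAdef
    have hA : 0 < A := by rw [hAdef]; positivity
    set k : ℝ := -(A ^ (m - 1)) with hkdef
    have hmLap : mLap m (fun y : EuclideanSpace ℝ (Fin N) => C * (1 + ‖y‖ ^ q) ^ α) x
        = N * (k * (1 + ‖x‖ ^ q) ^ β)
          + k * β * q * (1 + ‖x‖ ^ q) ^ (β - 1) * ‖x‖ ^ q := by
      rw [mLap]
      have hfun : (fun y : EuclideanSpace ℝ (Fin N) =>
          (‖gradient (fun z : EuclideanSpace ℝ (Fin N) => C * (1 + ‖z‖ ^ q) ^ α) y‖ ^ (m - 2)) •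
            gradient (fun z : EuclideanSpace ℝ (Fin N) => C * (1 + ‖z‖ ^ q) ^ α) y)
          = fun y : EuclideanSpace ℝ (Fin N) => (k * (1 + ‖y‖ ^ q) ^ β) • y := by
        funext y
        rw [aux_field m q α C hq1 hq hC hα y, hkdef, hAdef, hβdef]
      rw [hfun]
      exact aux_vdiv k β q hq1 x
    rw [hmLap]
    set r : ℝ := ‖x‖ ^ q with hrdef
    have hr0 : 0 ≤ r := Real.rpow_nonneg (norm_nonneg x) q
    have hw : (0:ℝ) < 1 + r := by linarith
    have hwβ : (0:ℝ) < (1 + r) ^ β := Real.rpow_pos_of_pos hw _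
    have hwβ1 : (0:ℝ) < (1 + r) ^ (β - 1) := Real.rpow_pos_of_pos hw _
    -- LHS = C^p * (1+r)^β
    have hLHS : (C * (1 + r) ^ α) ^ p = C ^ p * (1 + r) ^ β := by
      have hαp : α * p = β := by
        rw [hβdef]; linear_combination hαval
      rw [Real.mul_rpow hC.le (Real.rpow_pos_of_pos hw α).le, ← Real.rpow_mul hw.le, hαp]
    rw [hLHS]
    have hwsplit : (1 + r) ^ β = (1 + r) ^ (β - 1) * (1 + r) := by
      rw [show β = (β - 1) + 1 by ring, Real.rpow_add hw, Real.rpow_one]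
      ring_nf
    have hbr : lam * (1 + r) ≤ N * (1 + r) + β * q * r := by
      have h1 : lam ≤ (N:ℝ) := min_le_left _ _
      have h2 : lam ≤ (N:ℝ) + β * q := min_le_right _ _
      nlinarith
    have hApow : A ^ (m - 1) = C ^ (m - 1) * ((-α) * q) ^ (m - 1) := by
      rw [hAdef, show C * -α * q = C * ((-α) * q) by ring,
        Real.mul_rpow hC.le (by positivity)]
    have hCp : C ^ p = C ^ (m - 1) * C ^ (p - m + 1) := by
      rw [← Real.rpow_add hC]
      congr 1
      ring
    have hCm : (0:ℝ) < C ^ (m - 1) := Real.rpow_pos_of_pos hC _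
    have hAm : (0:ℝ) < A ^ (m - 1) := Real.rpow_pos_of_pos hA _
    calc C ^ p * (1 + r) ^ β
        = C ^ (m - 1) * C ^ (p - m + 1) * (1 + r) ^ β := by rw [hCp]
      _ ≤ C ^ (m - 1) * M * (1 + r) ^ β := by
          apply mul_le_mul_of_nonneg_right _ hwβ.le
          exact mul_le_mul_of_nonneg_left hCkey hCm.le
      _ = A ^ (m - 1) * ((1 + r) ^ (β - 1) * (lam * (1 + r))) := by
          rw [hApow, hMdef, hwsplit]; ring
      _ ≤ A ^ (m - 1) * ((1 + r) ^ (β - 1) * ((N:ℝ) * (1 + r) + β * q * r)) := by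
          apply mul_le_mul_of_nonneg_left _ hAm.le
          exact mul_le_mul_of_nonneg_left hbr hwβ1.le
      _ = -((N:ℝ) * (k * (1 + r) ^ β) + k * β * q * (1 + r) ^ (β - 1) * r) := by
          rw [hkdef, hwsplit]; ring
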